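/- Let W be an N×N real symmetric matrix, μ ∈ ℝ with |μ| > ‖W‖ (operator norm), and let e₁,…,e_k ∈ ℝ^N and θ₁,…,θ_k > 0, c > 0 be given. Suppose v ∈ ℝ^N satisfies μ v = W v + c Σ_{l=1}^k θ_l (e_l'v) e_l. Define u ∈ ℝ^k by u(j) = √θⱼ (eⱼ'v), and the k×k matrix V by V(j,l) = c √(θⱼ θ_l) eⱼ'(I − μ^{-1} W)^{-1} e_l. Then V u = μ u. Consequently, if u ≠ 0, then μ is an eigenvalue of the k×k matrix V. -/

import Mathlib

open Matrix

private lemma dot_sum_aux {n m : ℕ} (v : Fin n → ℝ) (f : Fin m → Fin n → ℝ) :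
    v ⬝ᵥ (∑ l, f l) = ∑ l, v ⬝ᵥ f l := by
  simp only [dotProduct, Finset.sum_apply, Finset.mul_sum]
  exact Finset.sum_comm

private lemma mulVec_sum_aux {n m : ℕ} (A : Matrix (Fin n) (Fin n) ℝ) (f : Fin m → Fin n → ℝ) :
    A *ᵥ (∑ l, f l) = ∑ l, A *ᵥ f l := by
  rw [← Matrix.mulVecLin_apply, map_sum]
  simp [Matrix.mulVecLin_apply]

theorem stmt14 (N k : ℕ) (W : Matrix (Fin N) (Fin N) ℝ) (hW : W.IsSymm)
    (μ : ℝ)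
    (hμ : ‖LinearMap.toContinuousLinearMap (Matrix.toEuclideanLin W)‖ < |μ|)
    (e : Fin k → Fin N → ℝ) (θ : Fin k → ℝ) (hθ : ∀ l, 0 < θ l) (c : ℝ) (hc : 0 < c)
    (v : Fin N → ℝ)
    (hv : μ • v = W.mulVec v + c • ∑ l, (θ l * (e l ⬝ᵥ v)) • e l)
    (u : Fin k → ℝ) (hu : ∀ j, u j = Real.sqrt (θ j) * (e j ⬝ᵥ v))
    (V : Matrix (Fin k) (Fin k) ℝ)
    (hV : ∀ j l, V j l = c * Real.sqrt (θ j * θ l) * (e j ⬝ᵥ (1 - μ⁻¹ • W)⁻¹.mulVec (e l))) :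
    V.mulVec u = μ • u ∧ (u ≠ 0 → μ ∈ spectrum ℝ V) := by
  have hμ0 : μ ≠ 0 := by
    intro h
    rw [h, abs_zero] at hμ
    exact absurd hμ (not_lt.mpr (norm_nonneg _))
  set A : Matrix (Fin N) (Fin N) ℝ := 1 - μ⁻¹ • W with hA
  -- A is invertible
  have hAdet : IsUnit A.det := by
    by_contra h
    have hdet : A.det = 0 := by
      simpa [isUnit_iff_ne_zero] using h
    obtain ⟨x, hx0, hx⟩ := (Matrix.exists_mulVec_eq_zero_iff.mpr hdet)
    have hWx : W *ᵥ x = μ • x := by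
      have : x - μ⁻¹ • (W *ᵥ x) = 0 := by
        simpa [hA, Matrix.sub_mulVec, Matrix.smul_mulVec] using hx
      have h2 : μ⁻¹ • (W *ᵥ x) = x := by
        have := sub_eq_zero.mp this
        exact this.symm
      calc W *ᵥ x = μ • (μ⁻¹ • (W *ᵥ x)) := by
            rw [smul_smul, mul_inv_cancel₀ hμ0, one_smul]
        _ = μ • x := by rw [h2]
    -- contradiction with operator norm
    set y : EuclideanSpace ℝ (Fin N) := (WithLp.equiv 2 (Fin N → ℝ)).symm x with hy
    have hy0 : y ≠ 0 := by
      simpa [hy] using hx0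
    have hle := (LinearMap.toContinuousLinearMap (Matrix.toEuclideanLin W)).le_opNorm y
    have heq : (LinearMap.toContinuousLinearMap (Matrix.toEuclideanLin W)) y = μ • y := by
      simp only [LinearMap.coe_toContinuousLinearMap', hy,
        WithLp.equiv_symm_apply, Matrix.toEuclideanLin_apply_piLp_toLp, hWx]
      rfl
    rw [heq, norm_smul] at hle
    have hyn : (0:ℝ) < ‖y‖ := by
      rw [norm_pos_iff]
      exact hy0
    have : |μ| * ‖y‖ < |μ| * ‖y‖ := by
      calc |μ| * ‖y‖ ≤ ‖LinearMap.toContinuousLinearMap (Matrix.toEuclideanLin W)‖ * ‖y‖ := by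
            rw [Real.norm_eq_abs] at hle
            exact hle
        _ < |μ| * ‖y‖ := by exact mul_lt_mul_of_pos_right hμ hyn
    exact lt_irrefl _ this
  set s : Fin N → ℝ := ∑ l, (θ l * (e l ⬝ᵥ v)) • e l with hs
  have hAv : A *ᵥ v = (μ⁻¹ * c) • s := by
    have h1 : W *ᵥ v = μ • v - c • s := by
      rw [hv]; abel
    rw [hA, Matrix.sub_mulVec, Matrix.one_mulVec, Matrix.smul_mulVec, h1]
    rw [smul_sub, smul_smul, inv_mul_cancel₀ hμ0, one_smul, smul_smul]
    abel
  have hAinv : A⁻¹ *ᵥ s = (μ / c) • v := by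
    have h1 : A⁻¹ *ᵥ (A *ᵥ v) = v := by
      rw [Matrix.mulVec_mulVec, Matrix.nonsing_inv_mul _ hAdet, Matrix.one_mulVec]
    rw [hAv, Matrix.mulVec_smul] at h1
    have h2 : (μ / c) • ((μ⁻¹ * c) • (A⁻¹ *ᵥ s)) = (μ / c) • v := by rw [h1]
    rw [smul_smul] at h2
    have : μ / c * (μ⁻¹ * c) = 1 := by
      field_simp
    rwa [this, one_smul] at h2
  have hmain : V.mulVec u = μ • u := by
    funext j
    have hsqrt : ∀ l, Real.sqrt (θ j * θ l) * Real.sqrt (θ l) = Real.sqrt (θ j) * θ l := by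
      intro l
      rw [Real.sqrt_mul (le_of_lt (hθ j)), mul_assoc,
        Real.mul_self_sqrt (le_of_lt (hθ l))]
    have hsum : e j ⬝ᵥ (A⁻¹ *ᵥ s) = ∑ l, (θ l * (e l ⬝ᵥ v)) * (e j ⬝ᵥ (A⁻¹ *ᵥ e l)) := by
      rw [hs, mulVec_sum_aux]
      rw [show (fun l => A⁻¹ *ᵥ (θ l * (e l ⬝ᵥ v)) • e l) = fun l => (θ l * (e l ⬝ᵥ v)) • (A⁻¹ *ᵥ e l) from funext fun l => Matrix.mulVec_smul _ _ _]
      rw [dot_sum_aux]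
      refine Finset.sum_congr rfl fun l _ => ?_
      rw [dotProduct_smul, smul_eq_mul]
    have hrow0 : (V.mulVec u) j = ∑ l, V j l * u l := rfl
    have hrow : (V.mulVec u) j = c * Real.sqrt (θ j) * (e j ⬝ᵥ (A⁻¹ *ᵥ s)) := by
      rw [hrow0, hsum, Finset.mul_sum]
      refine Finset.sum_congr rfl fun l _ => ?_
      rw [hV, hu]
      linear_combination (c * (e j ⬝ᵥ A⁻¹ *ᵥ e l) * (e l ⬝ᵥ v)) * hsqrt l
    rw [hrow, hAinv, dotProduct_smul, smul_eq_mul]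
    simp only [Pi.smul_apply, smul_eq_mul, hu]
    field_simp
  refine ⟨hmain, fun hu0 => ?_⟩
  rw [spectrum.mem_iff]
  intro hunit
  have hdet : IsUnit (algebraMap ℝ (Matrix (Fin k) (Fin k) ℝ) μ - V).det :=
    (Matrix.isUnit_iff_isUnit_det _).mp hunit
  have hker : (algebraMap ℝ (Matrix (Fin k) (Fin k) ℝ) μ - V) *ᵥ u = 0 := by
    rw [Matrix.sub_mulVec, hmain]
    have : algebraMap ℝ (Matrix (Fin k) (Fin k) ℝ) μ *ᵥ u = μ • u := by
      rw [Algebra.algebraMap_eq_smul_one, Matrix.smul_mulVec, Matrix.one_mulVec]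
    rw [this]; abel
  have : (algebraMap ℝ (Matrix (Fin k) (Fin k) ℝ) μ - V).det = 0 :=
    Matrix.exists_mulVec_eq_zero_iff.mp ⟨u, hu0, hker⟩
  rw [this] at hdet
  exact absurd hdet (by simp)
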